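/- For all 1 ≤ i, j ≤ n and all z, z' ∈ ℂ^n, ∫_{ℂ^n} 𝒫(z, w) · w_i w_j · 𝒫(w, z') dW = z_i z_j · 𝒫(z, z') and ∫_{ℂ^n} 𝒫(z, w) · w̄_i w̄_j · 𝒫(w, z') dW = z̄'_i z̄'_j · 𝒫(z, z'). -/

import Mathlib

open MeasureTheory Complex

noncomputable section

/-- The Wirtinger derivative `∂/∂z_j` of a function on `ℂⁿ ≅ ℝ^{2n}`. -/
def wirtingerD {n : ℕ} (j : Fin n) (f : (Fin n → ℂ) → ℂ) (z : Fin n → ℂ) : ℂ :=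
  (1 / 2) * (fderiv ℝ f z (Pi.single j 1) - Complex.I * fderiv ℝ f z (Pi.single j Complex.I))

/-- The Wirtinger derivative `∂/∂z̄_j` of a function on `ℂⁿ ≅ ℝ^{2n}`. -/
def wirtingerDBar {n : ℕ} (j : Fin n) (f : (Fin n → ℂ) → ℂ) (z : Fin n → ℂ) : ℂ :=
  (1 / 2) * (fderiv ℝ f z (Pi.single j 1) + Complex.I * fderiv ℝ f z (Pi.single j Complex.I))

/-- The creation operator `b_j = -2 ∂/∂z_j + π z̄_j`. -/
def bOp {n : ℕ} (j : Fin n) (f : (Fin n → ℂ) → ℂ) : (Fin n → ℂ) → ℂ :=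
  fun z => -2 * wirtingerD j f z + (Real.pi : ℂ) * (starRingEnd ℂ) (z j) * f z

/-- The annihilation operator `b_j⁺ = 2 ∂/∂z̄_j + π z_j`. -/
def bPlusOp {n : ℕ} (j : Fin n) (f : (Fin n → ℂ) → ℂ) : (Fin n → ℂ) → ℂ :=
  fun z => 2 * wirtingerDBar j f z + (Real.pi : ℂ) * z j * f z

/-- The Gaussian `exp(-(π/2) Σ |z_i|²)`. -/
def gaussFn {n : ℕ} (z : Fin n → ℂ) : ℂ :=
  Complex.exp (-((Real.pi : ℂ) / 2) * ∑ i, (Complex.normSq (z i) : ℂ))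

/-- The iterated operator `b^α = b_1^{α_1} ∘ ⋯ ∘ b_n^{α_n}`. -/
def bPow {n : ℕ} (α : Fin n → ℕ) (f : (Fin n → ℂ) → ℂ) : (Fin n → ℂ) → ℂ :=
  (List.ofFn (fun j : Fin n => (bOp j)^[α j])).foldr (· ∘ ·) id f

/-- The eigenfunctions `f_{α,β} = b^α (z^β exp(-(π/2) Σ |z_i|²))` of the model operator. -/
def eigFun {n : ℕ} (α β : Fin n → ℕ) : (Fin n → ℂ) → ℂ :=
  bPow α (fun z => (∏ j, z j ^ β j) * gaussFn z)

/-- The model Bergman kernel `𝒫(z,w) = exp(-(π/2) Σ (|z_j|² + |w_j|² - 2 z_j w̄_j))`. -/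
def bergK {n : ℕ} (z w : Fin n → ℂ) : ℂ :=
  Complex.exp (-((Real.pi : ℂ) / 2) *
    ∑ j, ((Complex.normSq (z j) : ℂ) + (Complex.normSq (w j) : ℂ)
            - 2 * z j * (starRingEnd ℂ) (w j)))

/-- `F : ℂⁿ × ℂⁿ → ℂ` is a polynomial function in the underlying real coordinates, equivalently
a polynomial in the coordinates `z_i, z̄_i` of the first argument and `z'_i, z̄'_i` of the
second one. -/
def IsPolyKernel {n : ℕ} (F : (Fin n → ℂ) → (Fin n → ℂ) → ℂ) : Prop :=
  ∃ p : MvPolynomial (Fin n ⊕ Fin n ⊕ Fin n ⊕ Fin n) ℂ,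
    ∀ z z' : Fin n → ℂ,
      F z z' = MvPolynomial.eval
        (Sum.elim (fun i => z i) (Sum.elim (fun i => (starRingEnd ℂ) (z i))
          (Sum.elim (fun i => z' i) (fun i => (starRingEnd ℂ) (z' i))))) p

/-- Under the identification `ℝ^{2n} ≅ ℂⁿ`, `z_j = Z_{2j-1} + i Z_{2j}`, the direction in `ℂⁿ`
corresponding to the `j`-th real coordinate `Z_j`. -/
def coordDir {n : ℕ} (j : Fin (2 * n)) : Fin n → ℂ :=
  Pi.single ⟨j.val / 2, by have := j.isLt; omega⟩ (if j.val % 2 = 0 then 1 else Complex.I)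

/-- The `j`-th real coordinate of `w ∈ ℂⁿ ≅ ℝ^{2n}`, viewed as a complex number. -/
def realCoordC {n : ℕ} (j : Fin (2 * n)) (w : Fin n → ℂ) : ℂ :=
  if j.val % 2 = 0 then ((w ⟨j.val / 2, by have := j.isLt; omega⟩).re : ℂ)
  else ((w ⟨j.val / 2, by have := j.isLt; omega⟩).im : ℂ)

/-- The partial derivative `∂/∂Z_j` in the `j`-th real coordinate of `ℂⁿ ≅ ℝ^{2n}`. -/
def realPDeriv {n : ℕ} (j : Fin (2 * n)) (f : (Fin n → ℂ) → ℂ) (z : Fin n → ℂ) : ℂ :=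
  fderiv ℝ f z (coordDir j)

/-- The iterated partial derivative `∂^α` in the real coordinates of `ℂⁿ ≅ ℝ^{2n}`,
for a multi-index `α ∈ ℕ^{2n}`. -/
def iterD {n : ℕ} (α : Fin (2 * n) → ℕ) (f : (Fin n → ℂ) → ℂ) : (Fin n → ℂ) → ℂ :=
  (List.ofFn (fun j : Fin (2 * n) =>
    (fun (g : (Fin n → ℂ) → ℂ) (z : Fin n → ℂ) => fderiv ℝ g z (coordDir j))^[α j])).foldr
    (· ∘ ·) id f

section BergKAux
open Real Filter Set

/-- integrability of moments -/
lemma intk (k : ℕ) (hk : k ≤ 2) (c : ℂ) :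
    Integrable fun x : ℝ => (x:ℂ)^k * Complex.exp (-(π:ℂ)*x^2 + c*x) := by
  have hcont : Continuous fun x : ℝ => (x:ℂ)^k * Complex.exp (-(π:ℂ)*x^2 + c*x) := by
    fun_prop
  refine Integrable.mono' (g := fun x => Real.exp (c.re^2/(2*π)) *
      (Real.exp (-(π/2)*x^2) + x^(2:ℕ) * Real.exp (-(π/2)*x^2)))
    ?_ hcont.aestronglyMeasurable ?_
  · have h1 : Integrable fun x : ℝ => Real.exp (-(π/2)*x^2) :=
      integrable_exp_neg_mul_sq (by positivity)
    have h2 : Integrable fun x : ℝ => x^(2:ℕ) * Real.exp (-(π/2)*x^2) := by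
      have := integrable_rpow_mul_exp_neg_mul_sq (b := π/2) (by positivity)
        (s := ((2:ℕ):ℝ)) (by norm_num)
      simpa [Real.rpow_natCast] using this
    exact (h1.add h2).const_mul (Real.exp (c.re^2/(2*π)))
  · refine Filter.Eventually.of_forall fun x => ?_
    have h1 : ‖(x:ℂ)^k * Complex.exp (-(π:ℂ)*x^2 + c*x)‖
        = |x|^k * Real.exp (-π*x^2 + c.re*x) := by
      rw [norm_mul, norm_pow, Complex.norm_real, Real.norm_eq_abs,
        Complex.norm_exp]
      congr 2
      simp [Complex.add_re, Complex.mul_re, ← Complex.ofReal_pow]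
    rw [h1]
    have h2 : |x|^k ≤ 1 + x^2 := by
      have hx : |x| ^ k ≤ max 1 (|x|^2) := by
        rcases le_total (|x|) 1 with h | h
        · exact le_max_of_le_left (pow_le_one₀ (abs_nonneg x) h)
        · exact le_max_of_le_right (pow_le_pow_right₀ h hk)
      calc |x|^k ≤ max 1 (|x|^2) := hx
        _ ≤ 1 + x^2 := by rw [_root_.sq_abs]; rcases max_cases 1 (x^2) with ⟨h, _⟩ | ⟨h, _⟩ <;>
            rw [h] <;> nlinarith [sq_nonneg x]
    have h3 : Real.exp (-π*x^2 + c.re*x) ≤ Real.exp (c.re^2/(2*π)) * Real.exp (-(π/2)*x^2) := by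
      rw [← Real.exp_add]
      apply Real.exp_le_exp.2
      have key : c.re^2/(2*π) + -(π/2)*x^2 - (-π*x^2 + c.re*x) = (π*x - c.re)^2/(2*π) := by
        field_simp
        ring
      have := div_nonneg (sq_nonneg (π*x - c.re)) (by positivity : (0:ℝ) ≤ 2*π)
      linarith
    have h4 : (0:ℝ) ≤ Real.exp (-π*x^2 + c.re*x) := (Real.exp_pos _).le
    calc |x|^k * Real.exp (-π*x^2 + c.re*x)
        ≤ (1 + x^2) * (Real.exp (c.re^2/(2*π)) * Real.exp (-(π/2)*x^2)) := by
          apply mul_le_mul h2 h3 h4 (by positivity)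
      _ = Real.exp (c.re^2/(2*π)) * (Real.exp (-(π/2)*x^2) + x^(2:ℕ) * Real.exp (-(π/2)*x^2)) := by
          push_cast; ring

/-- ∫ f' = 0 for nice f -/
lemma int_deriv_zero {f f' : ℝ → ℂ} (hd : ∀ x, HasDerivAt f (f' x) x)
    (hi : Integrable f') (ht : Tendsto f atTop (nhds 0)) (hb : Tendsto f atBot (nhds 0)) :
    ∫ x, f' x = 0 := by
  rw [← intervalIntegral.integral_Iic_add_Ioi (b := (0:ℝ)) hi.integrableOn hi.integrableOn]
  rw [integral_Ioi_of_hasDerivAt_of_tendsto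
      (hd 0).continuousAt.continuousWithinAt (fun x _ => hd x) hi.integrableOn ht,
    integral_Iic_of_hasDerivAt_of_tendsto
      (hd 0).continuousAt.continuousWithinAt (fun x _ => hd x) hi.integrableOn hb]
  ring

lemma gauss_deriv (c : ℂ) (x : ℝ) :
    HasDerivAt (fun x : ℝ => Complex.exp (-(π:ℂ)*x^2 + c*x))
      ((c - 2*π*x) * Complex.exp (-(π:ℂ)*x^2 + c*x)) x := by
  have hx : HasDerivAt (fun x : ℝ => (x:ℂ)) 1 x := by simpa using (hasDerivAt_id x).ofReal_comp
  have h2 : HasDerivAt (fun x : ℝ => (x:ℂ)^2) (2*x) x := by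
    have h := hx.mul hx
    simp only [one_mul, mul_one] at h
    have e1 : (fun x : ℝ => (x:ℂ)^2) = fun x : ℝ => (x:ℂ)*(x:ℂ) := by
      funext y; ring
    have e2 : ((2:ℂ)*(x:ℂ)) = (x:ℂ) + (x:ℂ) := by ring
    rw [e1]
    push_cast
    rw [e2]
    exact h
  have h3 : HasDerivAt (fun x : ℝ => -(π:ℂ)*(x:ℂ)^2) (-(π:ℂ)*(2*x)) x := h2.const_mul _
  have h4 : HasDerivAt (fun x : ℝ => c*(x:ℂ)) (c*1) x := hx.const_mul c
  have h1 : HasDerivAt (fun x : ℝ => -(π:ℂ)*x^2 + c*x) (c - 2*π*x) x := by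
    exact (h3.add h4).congr_deriv (by ring)
  simpa [mul_comm] using h1.cexp

lemma real_gauss_tendsto (a : ℝ) (l : Filter ℝ) (hl : l = atTop ∨ l = atBot) :
    Tendsto (fun x : ℝ => Real.exp (-π*x^2 + a*x)) l (nhds 0) := by
  have hsq : Tendsto (fun x : ℝ => x^2) l atTop := by
    rcases hl with rfl | rfl
    · exact tendsto_pow_atTop (by norm_num : (2:ℕ) ≠ 0)
    · have := (tendsto_pow_atTop (by norm_num : (2:ℕ) ≠ 0)).comp
        (tendsto_neg_atBot_atTop : Tendsto _ (atBot : Filter ℝ) atTop)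
      simpa [Function.comp_def, neg_sq] using this
  have harg : Tendsto (fun x : ℝ => a^2/(2*π) + -(π/2)*x^2) l atBot := by
    apply tendsto_atBot_add_const_left
    exact hsq.const_mul_atTop_of_neg (neg_lt_zero.2 (by positivity))
  have hmono : Tendsto (fun x : ℝ => -π*x^2 + a*x) l atBot := by
    apply tendsto_atBot_mono _ harg
    intro x
    have key : a^2/(2*π) + -(π/2)*x^2 - (-π*x^2 + a*x) = (π*x - a)^2/(2*π) := by
      field_simp; ring
    have := div_nonneg (sq_nonneg (π*x - a)) (by positivity : (0:ℝ) ≤ 2*π)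
    linarith
  exact Real.tendsto_exp_atBot.comp hmono

lemma norm_gauss (c : ℂ) (k : ℕ) (x : ℝ) :
    ‖(x:ℂ)^k * Complex.exp (-(π:ℂ)*x^2 + c*x)‖ = |x|^k * Real.exp (-π*x^2 + c.re*x) := by
  rw [norm_mul, norm_pow, Complex.norm_real, Real.norm_eq_abs,
    Complex.norm_exp]
  congr 2
  simp [Complex.add_re, Complex.mul_re, ← Complex.ofReal_pow]

lemma pow_gauss_tendsto (k : ℕ) (c : ℂ) (l : Filter ℝ) (hl : l = atTop ∨ l = atBot) :
    Tendsto (fun x : ℝ => (x:ℂ)^k * Complex.exp (-(π:ℂ)*x^2 + c*x)) l (nhds 0) := by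
  have habs : ∀ x : ℝ, |x|^k ≤ Real.exp (k*|x|) := by
    intro x
    calc |x|^k ≤ (Real.exp |x|)^k := by
          apply pow_le_pow_left₀ (abs_nonneg x)
          linarith [Real.add_one_le_exp |x|, abs_nonneg x]
      _ = Real.exp (k*|x|) := by rw [← Real.exp_nat_mul]
  rcases hl with rfl | rfl
  · refine squeeze_zero_norm' (a := fun x => Real.exp (-π*x^2 + (c.re + k)*x)) ?_ ?_
    · filter_upwards [eventually_ge_atTop (0:ℝ)] with x hx
      rw [norm_gauss]
      calc |x|^k * Real.exp (-π*x^2 + c.re*x)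
          ≤ Real.exp (k*|x|) * Real.exp (-π*x^2 + c.re*x) := by
            apply mul_le_mul_of_nonneg_right (habs x) (Real.exp_pos _).le
        _ = Real.exp (-π*x^2 + (c.re + k)*x) := by
            rw [← Real.exp_add]
            congr 1
            rw [_root_.abs_of_nonneg hx]
            ring
    · exact real_gauss_tendsto _ _ (Or.inl rfl)
  · refine squeeze_zero_norm' (a := fun x => Real.exp (-π*x^2 + (c.re - k)*x)) ?_ ?_
    · filter_upwards [eventually_le_atBot (0:ℝ)] with x hx
      rw [norm_gauss]
      calc |x|^k * Real.exp (-π*x^2 + c.re*x)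
          ≤ Real.exp (k*|x|) * Real.exp (-π*x^2 + c.re*x) := by
            apply mul_le_mul_of_nonneg_right (habs x) (Real.exp_pos _).le
        _ = Real.exp (-π*x^2 + (c.re - k)*x) := by
            rw [← Real.exp_add]
            congr 1
            rw [_root_.abs_of_nonpos hx]
            ring
    · exact real_gauss_tendsto _ _ (Or.inr rfl)

lemma int0 (c : ℂ) :
    ∫ x : ℝ, Complex.exp (-(π:ℂ)*x^2 + c*x) = Complex.exp (c^2/(4*π)) := by
  have hπ : (π:ℂ) ≠ 0 := by exact_mod_cast pi_ne_zero
  have h := integral_cexp_quadratic (b := -(π:ℂ)) (by simpa using pi_pos) c 0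
  simp only [add_zero] at h
  rw [h, neg_neg, div_self hπ, one_cpow, one_mul]
  congr 1
  field_simp
  ring

lemma int1 (c : ℂ) :
    ∫ x : ℝ, (x:ℂ) * Complex.exp (-(π:ℂ)*x^2 + c*x)
      = c/(2*π) * Complex.exp (c^2/(4*π)) := by
  have hπ : (π:ℂ) ≠ 0 := by exact_mod_cast pi_ne_zero
  have i0 : Integrable (fun x : ℝ => Complex.exp (-(π:ℂ)*x^2 + c*x)) := by
    have := intk 0 (by norm_num) c
    simpa only [pow_zero, one_mul] using this
  have i1 : Integrable (fun x : ℝ => (x:ℂ) * Complex.exp (-(π:ℂ)*x^2 + c*x)) := by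
    have := intk 1 (by norm_num) c
    simpa only [pow_one] using this
  have hi : Integrable (fun x : ℝ =>
      (c - 2*(π:ℂ)*x) * Complex.exp (-(π:ℂ)*x^2 + c*x)) := by
    apply ((i0.const_mul c).sub (i1.const_mul (2*(π:ℂ)))).congr
    refine Filter.Eventually.of_forall fun x => ?_
    simp only [Pi.sub_apply]
    ring
  have hz : (∫ x : ℝ, (c - 2*(π:ℂ)*x) * Complex.exp (-(π:ℂ)*x^2 + c*x)) = 0 := by
    refine int_deriv_zero (gauss_deriv c) hi ?_ ?_
    · simpa using pow_gauss_tendsto 0 c atTop (Or.inl rfl)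
    · simpa using pow_gauss_tendsto 0 c atBot (Or.inr rfl)
  have hsplit : (fun x : ℝ => (c - 2*(π:ℂ)*x) * Complex.exp (-(π:ℂ)*x^2 + c*x))
      = fun x : ℝ => c * Complex.exp (-(π:ℂ)*x^2 + c*x)
          - (2*(π:ℂ)) * ((x:ℂ) * Complex.exp (-(π:ℂ)*x^2 + c*x)) := by
    funext x; ring
  rw [hsplit, integral_sub (i0.const_mul c) (i1.const_mul (2*(π:ℂ))),
    integral_const_mul, integral_const_mul, int0] at hz
  have h2 : (2*(π:ℂ)) ≠ 0 := mul_ne_zero two_ne_zero hπ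
  rw [div_mul_eq_mul_div, eq_div_iff h2]
  linear_combination (-(1:ℂ)) * hz

lemma int2 (c : ℂ) :
    ∫ x : ℝ, (x:ℂ)^2 * Complex.exp (-(π:ℂ)*x^2 + c*x)
      = (2*π + c^2)/(4*π^2) * Complex.exp (c^2/(4*π)) := by
  have hπ : (π:ℂ) ≠ 0 := by exact_mod_cast pi_ne_zero
  have i0 : Integrable (fun x : ℝ => Complex.exp (-(π:ℂ)*x^2 + c*x)) := by
    have := intk 0 (by norm_num) c
    simpa only [pow_zero, one_mul] using this
  have i1 : Integrable (fun x : ℝ => (x:ℂ) * Complex.exp (-(π:ℂ)*x^2 + c*x)) := by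
    have := intk 1 (by norm_num) c
    simpa only [pow_one] using this
  have i2 : Integrable (fun x : ℝ => (x:ℂ)^2 * Complex.exp (-(π:ℂ)*x^2 + c*x)) :=
    intk 2 le_rfl c
  have hd : ∀ x : ℝ, HasDerivAt (fun x : ℝ => (x:ℂ) * Complex.exp (-(π:ℂ)*x^2 + c*x))
      (Complex.exp (-(π:ℂ)*x^2 + c*x) + c * ((x:ℂ) * Complex.exp (-(π:ℂ)*x^2 + c*x))
        - 2*(π:ℂ) * ((x:ℂ)^2 * Complex.exp (-(π:ℂ)*x^2 + c*x))) x := by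
    intro x
    have hx : HasDerivAt (fun x : ℝ => (x:ℂ)) 1 x := by
      simpa using (hasDerivAt_id x).ofReal_comp
    have := hx.mul (gauss_deriv c x)
    exact this.congr_deriv (by ring)
  have hi : Integrable (fun x : ℝ =>
      Complex.exp (-(π:ℂ)*x^2 + c*x) + c * ((x:ℂ) * Complex.exp (-(π:ℂ)*x^2 + c*x))
        - 2*(π:ℂ) * ((x:ℂ)^2 * Complex.exp (-(π:ℂ)*x^2 + c*x))) :=
    (i0.add (i1.const_mul c)).sub (i2.const_mul (2*(π:ℂ)))
  have hz := int_deriv_zero hd hi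
    (by simpa using pow_gauss_tendsto 1 c atTop (Or.inl rfl))
    (by simpa using pow_gauss_tendsto 1 c atBot (Or.inr rfl))
  have i01 : Integrable (fun x : ℝ =>
      Complex.exp (-(π:ℂ)*x^2 + c*x) + c * ((x:ℂ) * Complex.exp (-(π:ℂ)*x^2 + c*x))) :=
    i0.add (i1.const_mul c)
  rw [integral_sub i01 (i2.const_mul (2*(π:ℂ))),
    integral_add i0 (i1.const_mul c), integral_const_mul, integral_const_mul,
    int0, int1] at hz
  have h4 : (4*(π:ℂ)^2) ≠ 0 := by
    apply mul_ne_zero (by norm_num) (pow_ne_zero _ hπ)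
  simp only [neg_mul] at hz ⊢
  generalize (∫ x : ℝ, (x:ℂ)^2 * Complex.exp (-((π:ℂ)*x^2) + c*x)) = I at hz ⊢
  rw [div_mul_eq_mul_div, eq_div_iff h4]
  field_simp at hz
  linear_combination (-(1:ℂ)) * hz

lemma integral_complex_eq (F : ℂ → ℂ) :
    ∫ w : ℂ, F w = ∫ p : ℝ × ℝ, F ((p.1:ℂ) + (p.2:ℂ)*Complex.I) := by
  rw [← (Complex.volume_preserving_equiv_real_prod.symm _).integral_comp
        Complex.measurableEquivRealProd.symm.measurableEmbedding]
  simp_rw [Complex.measurableEquivRealProd_symm_apply, Complex.mk_eq_add_mul_I]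

lemma exp_split (a b : ℂ) (x y : ℝ) :
    -(π:ℂ) * (Complex.normSq ((x:ℂ) + (y:ℂ)*Complex.I) : ℂ)
      + (π:ℂ)*a*((starRingEnd ℂ) ((x:ℂ) + (y:ℂ)*Complex.I))
      + (π:ℂ)*b*((x:ℂ)+(y:ℂ)*Complex.I)
    = (-(π:ℂ)*x^2 + ((π:ℂ)*(a+b))*x) + (-(π:ℂ)*y^2 + ((π:ℂ)*Complex.I*(b-a))*y) := by
  have h1 : (Complex.normSq ((x:ℂ) + (y:ℂ)*Complex.I) : ℂ) = (x:ℂ)^2 + (y:ℂ)^2 := by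
    rw [Complex.normSq_add_mul_I]
    push_cast
    ring
  rw [h1]
  simp only [map_add, map_mul, Complex.conj_ofReal, Complex.conj_I]
  ring

lemma core (m : ℕ) (hm : m ≤ 2) (c1 c2 s : ℂ) (hs : s^2 = -1) :
    ∫ p : ℝ × ℝ, ((p.1:ℂ) + (p.2:ℂ)*s)^m *
      (Complex.exp (-(π:ℂ)*p.1^2 + c1*p.1) * Complex.exp (-(π:ℂ)*p.2^2 + c2*p.2))
    = ((c1 + s*c2)/(2*(π:ℂ)))^m * Complex.exp ((c1^2+c2^2)/(4*(π:ℂ))) := by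
  have i0 : ∀ c : ℂ, Integrable (fun x : ℝ => Complex.exp (-(π:ℂ)*x^2 + c*x)) := by
    intro c
    have := intk 0 (by norm_num) c
    simpa only [pow_zero, one_mul] using this
  have i1 : ∀ c : ℂ, Integrable (fun x : ℝ => (x:ℂ) * Complex.exp (-(π:ℂ)*x^2 + c*x)) := by
    intro c
    have := intk 1 (by norm_num) c
    simpa only [pow_one] using this
  have i2 : ∀ c : ℂ, Integrable (fun x : ℝ => (x:ℂ)^2 * Complex.exp (-(π:ℂ)*x^2 + c*x)) :=
    fun c => intk 2 le_rfl c
  have hexp : Complex.exp (c1^2/(4*(π:ℂ))) * Complex.exp (c2^2/(4*(π:ℂ)))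
      = Complex.exp ((c1^2+c2^2)/(4*(π:ℂ))) := by
    rw [← Complex.exp_add]
    congr 1
    ring
  have hvol : (volume : Measure (ℝ × ℝ)) = (volume : Measure ℝ).prod volume := rfl
  interval_cases m
  · simp only [pow_zero, one_mul]
    rw [hvol, integral_prod_mul (fun x : ℝ => Complex.exp (-(π:ℂ)*x^2 + c1*x)) (fun y : ℝ => Complex.exp (-(π:ℂ)*y^2 + c2*y)), int0, int0, hexp]
  · have hsplit : (fun p : ℝ × ℝ => ((p.1:ℂ) + (p.2:ℂ)*s)^1 *
        (Complex.exp (-(π:ℂ)*p.1^2 + c1*p.1) * Complex.exp (-(π:ℂ)*p.2^2 + c2*p.2)))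
        = fun p : ℝ × ℝ =>
          ((p.1:ℂ) * Complex.exp (-(π:ℂ)*p.1^2 + c1*p.1)) * Complex.exp (-(π:ℂ)*p.2^2 + c2*p.2)
          + Complex.exp (-(π:ℂ)*p.1^2 + c1*p.1)
              * (s * ((p.2:ℂ) * Complex.exp (-(π:ℂ)*p.2^2 + c2*p.2))) := by
      funext p
      ring
    have hA : Integrable (fun p : ℝ × ℝ =>
        ((p.1:ℂ) * Complex.exp (-(π:ℂ)*p.1^2 + c1*p.1)) * Complex.exp (-(π:ℂ)*p.2^2 + c2*p.2))
        ((volume : Measure ℝ).prod volume) := (i1 c1).mul_prod (i0 c2)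
    have hB : Integrable (fun p : ℝ × ℝ =>
        Complex.exp (-(π:ℂ)*p.1^2 + c1*p.1)
          * (s * ((p.2:ℂ) * Complex.exp (-(π:ℂ)*p.2^2 + c2*p.2))))
        ((volume : Measure ℝ).prod volume) := (i0 c1).mul_prod ((i1 c2).const_mul s)
    rw [hsplit, hvol, integral_add hA hB,
      integral_prod_mul (fun x : ℝ => (x:ℂ) * Complex.exp (-(π:ℂ)*x^2 + c1*x)) (fun y : ℝ => Complex.exp (-(π:ℂ)*y^2 + c2*y)), integral_prod_mul (fun x : ℝ => Complex.exp (-(π:ℂ)*x^2 + c1*x)) (fun y : ℝ => s * ((y:ℂ) * Complex.exp (-(π:ℂ)*y^2 + c2*y))),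
      integral_const_mul, int0, int1, int1, int0]
    linear_combination ((c1 + s*c2)/(2*(π:ℂ))) * hexp
  · have hsplit : (fun p : ℝ × ℝ => ((p.1:ℂ) + (p.2:ℂ)*s)^2 *
        (Complex.exp (-(π:ℂ)*p.1^2 + c1*p.1) * Complex.exp (-(π:ℂ)*p.2^2 + c2*p.2)))
        = fun p : ℝ × ℝ =>
          (((p.1:ℂ)^2 * Complex.exp (-(π:ℂ)*p.1^2 + c1*p.1)) * Complex.exp (-(π:ℂ)*p.2^2 + c2*p.2)
          + ((p.1:ℂ) * Complex.exp (-(π:ℂ)*p.1^2 + c1*p.1))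
              * ((2*s) * ((p.2:ℂ) * Complex.exp (-(π:ℂ)*p.2^2 + c2*p.2))))
          + Complex.exp (-(π:ℂ)*p.1^2 + c1*p.1)
              * (-((p.2:ℂ)^2 * Complex.exp (-(π:ℂ)*p.2^2 + c2*p.2))) := by
      funext p
      linear_combination ((p.2:ℂ)^2 * (Complex.exp (-(π:ℂ)*p.1^2 + c1*p.1)
        * Complex.exp (-(π:ℂ)*p.2^2 + c2*p.2))) * hs
    have hA : Integrable (fun p : ℝ × ℝ =>
        ((p.1:ℂ)^2 * Complex.exp (-(π:ℂ)*p.1^2 + c1*p.1)) * Complex.exp (-(π:ℂ)*p.2^2 + c2*p.2))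
        ((volume : Measure ℝ).prod volume) := (i2 c1).mul_prod (i0 c2)
    have hB : Integrable (fun p : ℝ × ℝ =>
        ((p.1:ℂ) * Complex.exp (-(π:ℂ)*p.1^2 + c1*p.1))
          * ((2*s) * ((p.2:ℂ) * Complex.exp (-(π:ℂ)*p.2^2 + c2*p.2))))
        ((volume : Measure ℝ).prod volume) := (i1 c1).mul_prod ((i1 c2).const_mul (2*s))
    have hC : Integrable (fun p : ℝ × ℝ =>
        Complex.exp (-(π:ℂ)*p.1^2 + c1*p.1)
          * (-((p.2:ℂ)^2 * Complex.exp (-(π:ℂ)*p.2^2 + c2*p.2))))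
        ((volume : Measure ℝ).prod volume) := by
      have := (i0 c1).mul_prod ((i2 c2).const_mul (-1))
      simpa only [neg_one_mul] using this
    have hAB : Integrable (fun p : ℝ × ℝ =>
        ((p.1:ℂ)^2 * Complex.exp (-(π:ℂ)*p.1^2 + c1*p.1)) * Complex.exp (-(π:ℂ)*p.2^2 + c2*p.2)
        + ((p.1:ℂ) * Complex.exp (-(π:ℂ)*p.1^2 + c1*p.1))
            * ((2*s) * ((p.2:ℂ) * Complex.exp (-(π:ℂ)*p.2^2 + c2*p.2))))
        ((volume : Measure ℝ).prod volume) := hA.add hB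
    rw [hsplit, hvol, integral_add hAB hC, integral_add hA hB,
      integral_prod_mul (fun x : ℝ => (x:ℂ)^2 * Complex.exp (-(π:ℂ)*x^2 + c1*x)) (fun y : ℝ => Complex.exp (-(π:ℂ)*y^2 + c2*y)), integral_prod_mul (fun x : ℝ => (x:ℂ) * Complex.exp (-(π:ℂ)*x^2 + c1*x)) (fun y : ℝ => (2*s) * ((y:ℂ) * Complex.exp (-(π:ℂ)*y^2 + c2*y))),
      integral_prod_mul (fun x : ℝ => Complex.exp (-(π:ℂ)*x^2 + c1*x)) (fun y : ℝ => -((y:ℂ)^2 * Complex.exp (-(π:ℂ)*y^2 + c2*y))), integral_const_mul, integral_neg,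
      int0, int1, int1, int2, int2, int0]
    linear_combination (((c1 + s*c2)/(2*(π:ℂ)))^2) * hexp
      + (-(c2^2/(4*(π:ℂ)^2)) * (Complex.exp (c1^2/(4*(π:ℂ)))
          * Complex.exp (c2^2/(4*(π:ℂ))))) * hs

lemma intC (m : ℕ) (hm : m ≤ 2) (a b : ℂ) :
    ∫ w : ℂ, w^m * Complex.exp (-(π:ℂ)*(Complex.normSq w : ℂ)
        + (π:ℂ)*a*((starRingEnd ℂ) w) + (π:ℂ)*b*w)
      = a^m * Complex.exp ((π:ℂ)*(a*b)) := by
  have hπ : (π:ℂ) ≠ 0 := by exact_mod_cast pi_ne_zero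
  have hse : ∀ (x y : ℝ) (u v : ℂ), Complex.exp ((-(π:ℂ)*x^2 + u*x) + (-(π:ℂ)*y^2 + v*y))
      = Complex.exp (-(π:ℂ)*x^2 + u*x) * Complex.exp (-(π:ℂ)*y^2 + v*y) :=
    fun x y u v => Complex.exp_add _ _
  rw [integral_complex_eq]
  simp_rw [exp_split a b, hse]
  rw [core m hm ((π:ℂ)*(a+b)) ((π:ℂ)*Complex.I*(b-a)) Complex.I Complex.I_sq]
  have hc : ((π:ℂ)*(a+b) + Complex.I*((π:ℂ)*Complex.I*(b-a)))/(2*(π:ℂ)) = a := by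
    rw [div_eq_iff (mul_ne_zero two_ne_zero hπ)]
    linear_combination ((π:ℂ)*(b-a)) * Complex.I_sq
  have he : (((π:ℂ)*(a+b))^2 + ((π:ℂ)*Complex.I*(b-a))^2)/(4*(π:ℂ)) = (π:ℂ)*(a*b) := by
    rw [div_eq_iff (mul_ne_zero (by norm_num : (4:ℂ) ≠ 0) hπ)]
    linear_combination ((π:ℂ)^2*(b-a)^2) * Complex.I_sq
  rw [hc, he]

lemma intCbar (m : ℕ) (hm : m ≤ 2) (a b : ℂ) :
    ∫ w : ℂ, ((starRingEnd ℂ) w)^m * Complex.exp (-(π:ℂ)*(Complex.normSq w : ℂ)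
        + (π:ℂ)*a*((starRingEnd ℂ) w) + (π:ℂ)*b*w)
      = b^m * Complex.exp ((π:ℂ)*(a*b)) := by
  have hπ : (π:ℂ) ≠ 0 := by exact_mod_cast pi_ne_zero
  rw [integral_complex_eq]
  simp_rw [exp_split a b]
  have hconj : ∀ x y : ℝ, (starRingEnd ℂ) ((x:ℂ) + (y:ℂ)*Complex.I)
      = (x:ℂ) + (y:ℂ)*(-Complex.I) := by
    intro x y
    rw [map_add, map_mul, Complex.conj_ofReal, Complex.conj_ofReal, Complex.conj_I]
  have hse : ∀ (x y : ℝ) (u v : ℂ), Complex.exp ((-(π:ℂ)*x^2 + u*x) + (-(π:ℂ)*y^2 + v*y))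
      = Complex.exp (-(π:ℂ)*x^2 + u*x) * Complex.exp (-(π:ℂ)*y^2 + v*y) :=
    fun x y u v => Complex.exp_add _ _
  simp_rw [hconj, hse]
  rw [core m hm ((π:ℂ)*(a+b)) ((π:ℂ)*Complex.I*(b-a)) (-Complex.I)
    (by rw [neg_sq]; exact Complex.I_sq)]
  have hc : ((π:ℂ)*(a+b) + (-Complex.I)*((π:ℂ)*Complex.I*(b-a)))/(2*(π:ℂ)) = b := by
    rw [div_eq_iff (mul_ne_zero two_ne_zero hπ)]
    linear_combination (-(π:ℂ)*(b-a)) * Complex.I_sq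
  have he : (((π:ℂ)*(a+b))^2 + ((π:ℂ)*Complex.I*(b-a))^2)/(4*(π:ℂ)) = (π:ℂ)*(a*b) := by
    rw [div_eq_iff (mul_ne_zero (by norm_num : (4:ℂ) ≠ 0) hπ)]
    linear_combination ((π:ℂ)^2*(b-a)^2) * Complex.I_sq
  rw [hc, he]

lemma hpow_aux {n : ℕ} (v : Fin n → ℂ) (i j : Fin n) :
    ∏ k, (v k)^(((if k = i then 1 else 0) + (if k = j then 1 else 0) : ℕ)) = v i * v j := by
  have h1 : ∀ t : Fin n, ∏ k, (v k)^((if k = t then 1 else 0 : ℕ)) = v t := by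
    intro t
    rw [Finset.prod_eq_single t (fun k _ hk => by simp [hk]) (by simp)]
    simp
  simp_rw [pow_add]
  rw [Finset.prod_mul_distrib, h1, h1]

lemma hmle_aux {n : ℕ} (i j k : Fin n) :
    ((if k = i then 1 else 0) + (if k = j then 1 else 0) : ℕ) ≤ 2 := by
  split_ifs <;> norm_num

lemma part1 {n : ℕ} (i j : Fin n) (z z' : Fin n → ℂ) :
    (∫ w : Fin n → ℂ, bergK z w * (w i * w j) * bergK w z') = z i * z j * bergK z z' := by
  have hfact : ∀ w : Fin n → ℂ,
      bergK z w * (w i * w j) * bergK w z'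
      = ∏ k, ((w k)^(((if k = i then 1 else 0) + (if k = j then 1 else 0) : ℕ)) *
          Complex.exp (-((π:ℂ)/2) * ((Complex.normSq (z k) : ℂ) + (Complex.normSq (z' k) : ℂ))
            + (-(π:ℂ)*(Complex.normSq (w k) : ℂ) + (π:ℂ)*(z k)*((starRingEnd ℂ) (w k))
               + (π:ℂ)*((starRingEnd ℂ) (z' k))*(w k)))) := by
    intro w
    rw [Finset.prod_mul_distrib, hpow_aux, ← Complex.exp_sum]
    unfold bergK
    have hre : ∀ (X Y P : ℂ), X * P * Y = P * (X * Y) := by intros; ring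
    rw [hre, ← Complex.exp_add]
    congr 1
    congr 1
    rw [Finset.mul_sum, Finset.mul_sum, ← Finset.sum_add_distrib]
    exact Finset.sum_congr rfl fun k _ => by ring
  simp only [hfact]
  rw [MeasureTheory.integral_fintype_prod_volume_eq_prod (ι := Fin n) (fun k (x : ℂ) =>
    x^(((if k = i then 1 else 0) + (if k = j then 1 else 0) : ℕ)) *
      Complex.exp (-((π:ℂ)/2) * ((Complex.normSq (z k) : ℂ) + (Complex.normSq (z' k) : ℂ))
        + (-(π:ℂ)*(Complex.normSq x : ℂ) + (π:ℂ)*(z k)*((starRingEnd ℂ) x)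
           + (π:ℂ)*((starRingEnd ℂ) (z' k))*x)))]
  have hone : ∀ k : Fin n,
      (∫ x : ℂ, x^(((if k = i then 1 else 0) + (if k = j then 1 else 0) : ℕ)) *
        Complex.exp (-((π:ℂ)/2) * ((Complex.normSq (z k) : ℂ) + (Complex.normSq (z' k) : ℂ))
          + (-(π:ℂ)*(Complex.normSq x : ℂ) + (π:ℂ)*(z k)*((starRingEnd ℂ) x)
             + (π:ℂ)*((starRingEnd ℂ) (z' k))*x)))
      = (z k)^(((if k = i then 1 else 0) + (if k = j then 1 else 0) : ℕ)) *
          Complex.exp (-((π:ℂ)/2) * ((Complex.normSq (z k) : ℂ) + (Complex.normSq (z' k) : ℂ))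
            + (π:ℂ)*(z k * (starRingEnd ℂ) (z' k))) := by
    intro k
    have hrw : (fun x : ℂ =>
        x^(((if k = i then 1 else 0) + (if k = j then 1 else 0) : ℕ)) *
        Complex.exp (-((π:ℂ)/2) * ((Complex.normSq (z k) : ℂ) + (Complex.normSq (z' k) : ℂ))
          + (-(π:ℂ)*(Complex.normSq x : ℂ) + (π:ℂ)*(z k)*((starRingEnd ℂ) x)
             + (π:ℂ)*((starRingEnd ℂ) (z' k))*x)))
        = fun x : ℂ =>
          Complex.exp (-((π:ℂ)/2) * ((Complex.normSq (z k) : ℂ) + (Complex.normSq (z' k) : ℂ)))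
          * (x^(((if k = i then 1 else 0) + (if k = j then 1 else 0) : ℕ)) *
             Complex.exp (-(π:ℂ)*(Complex.normSq x : ℂ) + (π:ℂ)*(z k)*((starRingEnd ℂ) x)
               + (π:ℂ)*((starRingEnd ℂ) (z' k))*x)) := by
      funext x
      rw [Complex.exp_add]
      ring
    rw [hrw, integral_const_mul, intC _ (hmle_aux i j k) (z k) ((starRingEnd ℂ) (z' k)),
      Complex.exp_add]
    ring
  rw [Finset.prod_congr rfl (fun k _ => hone k)]
  rw [Finset.prod_mul_distrib, hpow_aux, ← Complex.exp_sum]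
  unfold bergK
  congr 2
  rw [Finset.mul_sum]
  exact Finset.sum_congr rfl fun k _ => by ring

lemma part2 {n : ℕ} (i j : Fin n) (z z' : Fin n → ℂ) :
    (∫ w : Fin n → ℂ, bergK z w * ((starRingEnd ℂ) (w i) * (starRingEnd ℂ) (w j)) * bergK w z')
      = (starRingEnd ℂ) (z' i) * (starRingEnd ℂ) (z' j) * bergK z z' := by
  have hfact : ∀ w : Fin n → ℂ,
      bergK z w * ((starRingEnd ℂ) (w i) * (starRingEnd ℂ) (w j)) * bergK w z'
      = ∏ k, (((starRingEnd ℂ) (w k))^(((if k = i then 1 else 0) + (if k = j then 1 else 0) : ℕ)) *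
          Complex.exp (-((π:ℂ)/2) * ((Complex.normSq (z k) : ℂ) + (Complex.normSq (z' k) : ℂ))
            + (-(π:ℂ)*(Complex.normSq (w k) : ℂ) + (π:ℂ)*(z k)*((starRingEnd ℂ) (w k))
               + (π:ℂ)*((starRingEnd ℂ) (z' k))*(w k)))) := by
    intro w
    rw [Finset.prod_mul_distrib, hpow_aux (fun k => (starRingEnd ℂ) (w k)), ← Complex.exp_sum]
    unfold bergK
    have hre : ∀ (X Y P : ℂ), X * P * Y = P * (X * Y) := by intros; ring
    rw [hre, ← Complex.exp_add]
    congr 1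
    congr 1
    rw [Finset.mul_sum, Finset.mul_sum, ← Finset.sum_add_distrib]
    exact Finset.sum_congr rfl fun k _ => by ring
  simp only [hfact]
  rw [MeasureTheory.integral_fintype_prod_volume_eq_prod (ι := Fin n) (fun k (x : ℂ) =>
    ((starRingEnd ℂ) x)^(((if k = i then 1 else 0) + (if k = j then 1 else 0) : ℕ)) *
      Complex.exp (-((π:ℂ)/2) * ((Complex.normSq (z k) : ℂ) + (Complex.normSq (z' k) : ℂ))
        + (-(π:ℂ)*(Complex.normSq x : ℂ) + (π:ℂ)*(z k)*((starRingEnd ℂ) x)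
           + (π:ℂ)*((starRingEnd ℂ) (z' k))*x)))]
  have hone : ∀ k : Fin n,
      (∫ x : ℂ, ((starRingEnd ℂ) x)^(((if k = i then 1 else 0) + (if k = j then 1 else 0) : ℕ)) *
        Complex.exp (-((π:ℂ)/2) * ((Complex.normSq (z k) : ℂ) + (Complex.normSq (z' k) : ℂ))
          + (-(π:ℂ)*(Complex.normSq x : ℂ) + (π:ℂ)*(z k)*((starRingEnd ℂ) x)
             + (π:ℂ)*((starRingEnd ℂ) (z' k))*x)))
      = ((starRingEnd ℂ) (z' k))^(((if k = i then 1 else 0) + (if k = j then 1 else 0) : ℕ)) *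
          Complex.exp (-((π:ℂ)/2) * ((Complex.normSq (z k) : ℂ) + (Complex.normSq (z' k) : ℂ))
            + (π:ℂ)*(z k * (starRingEnd ℂ) (z' k))) := by
    intro k
    have hrw : (fun x : ℂ =>
        ((starRingEnd ℂ) x)^(((if k = i then 1 else 0) + (if k = j then 1 else 0) : ℕ)) *
        Complex.exp (-((π:ℂ)/2) * ((Complex.normSq (z k) : ℂ) + (Complex.normSq (z' k) : ℂ))
          + (-(π:ℂ)*(Complex.normSq x : ℂ) + (π:ℂ)*(z k)*((starRingEnd ℂ) x)
             + (π:ℂ)*((starRingEnd ℂ) (z' k))*x)))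
        = fun x : ℂ =>
          Complex.exp (-((π:ℂ)/2) * ((Complex.normSq (z k) : ℂ) + (Complex.normSq (z' k) : ℂ)))
          * (((starRingEnd ℂ) x)^(((if k = i then 1 else 0) + (if k = j then 1 else 0) : ℕ)) *
             Complex.exp (-(π:ℂ)*(Complex.normSq x : ℂ) + (π:ℂ)*(z k)*((starRingEnd ℂ) x)
               + (π:ℂ)*((starRingEnd ℂ) (z' k))*x)) := by
      funext x
      rw [Complex.exp_add]
      ring
    rw [hrw, integral_const_mul, intCbar _ (hmle_aux i j k) (z k) ((starRingEnd ℂ) (z' k)),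
      Complex.exp_add]
    ring
  rw [Finset.prod_congr rfl (fun k _ => hone k)]
  rw [Finset.prod_mul_distrib, hpow_aux (fun k => (starRingEnd ℂ) (z' k)), ← Complex.exp_sum]
  unfold bergK
  congr 2
  rw [Finset.mul_sum]
  exact Finset.sum_congr rfl fun k _ => by ring

end BergKAux

/-- `∫ 𝒫(z, w) w_i w_j 𝒫(w, z') dW = z_i z_j 𝒫(z, z')` and
`∫ 𝒫(z, w) w̄_i w̄_j 𝒫(w, z') dW = z̄'_i z̄'_j 𝒫(z, z')`. -/
theorem bergK_quadratic {n : ℕ} (i j : Fin n) (z z' : Fin n → ℂ) :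
    (∫ w : Fin n → ℂ, bergK z w * (w i * w j) * bergK w z') = z i * z j * bergK z z' ∧
    (∫ w : Fin n → ℂ, bergK z w * ((starRingEnd ℂ) (w i) * (starRingEnd ℂ) (w j)) * bergK w z')
      = (starRingEnd ℂ) (z' i) * (starRingEnd ℂ) (z' j) * bergK z z' := by
  exact ⟨part1 i j z z', part2 i j z z'⟩
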